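/- Suppose each ε_j is irrational. Then the set of periodic points of Φ on the page P equals {p₀, q₀}: Φ(p₀) = p₀ and Φ(q₀) = q₀, and conversely, if w ∈ P and Φ^k(w) = w for some integer k ≥ 1, then w = p₀ or w = q₀. -/

import Mathlib

open Complex

/-- The index `2(j+1)` in `Fin (2m+2)`, for `j : Fin m`. -/
def idxA (m : ℕ) (j : Fin m) : Fin (2 * m + 2) := ⟨2 * j.val + 2, by have := j.isLt; omega⟩

/-- The index `2(j+1)+1` in `Fin (2m+2)`, for `j : Fin m`. -/
def idxB (m : ℕ) (j : Fin m) : Fin (2 * m + 2) := ⟨2 * j.val + 3, by have := j.isLt; omega⟩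

/-- The rotation weights of the return map: `δ₀ = δ₁ = 0`, `δ_{2j} = ε_j`,
`δ_{2j+1} = −ε_j`. -/
def wtPhi (m : ℕ) (ε : Fin m → ℝ) : Fin (2 * m + 2) → ℝ := fun k =>
  if h : k.val ≤ 1 then 0
  else if k.val % 2 = 0 then ε ⟨k.val / 2 - 1, by have := k.isLt; omega⟩
  else -ε ⟨k.val / 2 - 1, by have := k.isLt; omega⟩

/-- The map `Φ : ℂ^{n+1} → ℂ^{n+1}` (`n = 2m+1`): `Φ(w)_k = e^{2π i δ_k}·w_k`, i.e.
`Φ(w)₀ = w₀`, `Φ(w)₁ = w₁`, `Φ(w)_{2j} = e^{2πiε_j}w_{2j}`,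
`Φ(w)_{2j+1} = e^{−2πiε_j}w_{2j+1}`. -/
noncomputable def PhiMap (m : ℕ) (ε : Fin m → ℝ) (w : Fin (2 * m + 2) → ℂ) :
    Fin (2 * m + 2) → ℂ :=
  fun k => Complex.exp (2 * (Real.pi : ℂ) * Complex.I * ((wtPhi m ε k : ℝ) : ℂ)) * w k

/-- The Brieskorn sphere `Σ ⊆ ℂ^{n+1}`, `n = 2m+1`. -/
def brSphere (m : ℕ) : Set (Fin (2 * m + 2) → ℂ) :=
  { w | w ⟨0, by omega⟩ ^ 2 + w ⟨1, by omega⟩ ^ 2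
          - 2 * Complex.I * ∑ j : Fin m, w (idxA m j) * w (idxB m j) = 0 ∧
        ∑ k, ‖w k‖ ^ 2 = 1 }

/-- The page `P = {w ∈ Σ : w₀ real and w₀ ≥ 0}`. -/
def pageP (m : ℕ) : Set (Fin (2 * m + 2) → ℂ) :=
  { w | w ∈ brSphere m ∧ (w ⟨0, by omega⟩).im = 0 ∧ 0 ≤ (w ⟨0, by omega⟩).re }

/-- The point `p₀ = (1/√2, i/√2, 0, …, 0)`. -/
noncomputable def pPt (m : ℕ) : Fin (2 * m + 2) → ℂ := fun k =>
  if k.val = 0 then (1 / (Real.sqrt 2 : ℂ))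
  else if k.val = 1 then Complex.I / (Real.sqrt 2 : ℂ)
  else 0

/-- The point `q₀ = (1/√2, −i/√2, 0, …, 0)`. -/
noncomputable def qPt (m : ℕ) : Fin (2 * m + 2) → ℂ := fun k =>
  if k.val = 0 then (1 / (Real.sqrt 2 : ℂ))
  else if k.val = 1 then -Complex.I / (Real.sqrt 2 : ℂ)
  else 0

lemma phi_fix_of_support (m : ℕ) (ε : Fin m → ℝ) (w : Fin (2*m+2) → ℂ)
    (hw : ∀ k : Fin (2*m+2), 2 ≤ k.val → w k = 0) : PhiMap m ε w = w := by
  funext k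
  by_cases h : k.val ≤ 1
  · simp [PhiMap, wtPhi, h]
  · simp [PhiMap, hw k (by omega)]

lemma iter_formula (m : ℕ) (ε : Fin m → ℝ)
    (k : ℕ) (w : Fin (2*m+2) → ℂ) (j : Fin (2*m+2)) :
    (PhiMap m ε)^[k] w j
      = Complex.exp (2 * (Real.pi : ℂ) * Complex.I * ((wtPhi m ε j : ℝ) : ℂ)) ^ k * w j := by
  induction k generalizing w with
  | zero => simp
  | succ n ih =>
    rw [Function.iterate_succ_apply]
    rw [ih]
    simp only [PhiMap]
    ring

/-- Suppose each `ε_j` is irrational.  Then the set of periodic points of `Φ` on the page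
`P` equals `{p₀, q₀}`: `Φ(p₀) = p₀`, `Φ(q₀) = q₀`, and conversely if `w ∈ P` and
`Φ^k(w) = w` for some integer `k ≥ 1`, then `w = p₀` or `w = q₀`. -/
theorem Phi_periodic_points (m : ℕ) (hm : 1 ≤ m) (ε : Fin m → ℝ)
    (hε : ∀ j, Irrational (ε j)) :
    PhiMap m ε (pPt m) = pPt m ∧ PhiMap m ε (qPt m) = qPt m ∧
    ∀ w ∈ pageP m, ∀ k : ℕ, 1 ≤ k → (PhiMap m ε)^[k] w = w → w = pPt m ∨ w = qPt m := by
  have twopiI_ne : (2 * (Real.pi:ℂ) * Complex.I) ≠ 0 := by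
    simp [Real.pi_ne_zero, Complex.I_ne_zero]
  refine ⟨phi_fix_of_support m ε _ ?_, phi_fix_of_support m ε _ ?_, ?_⟩
  · intro j hj
    simp only [pPt]
    rw [if_neg (by omega), if_neg (by omega)]
  · intro j hj
    simp only [qPt]
    rw [if_neg (by omega), if_neg (by omega)]
  intro w hw k hk hfix
  obtain ⟨⟨heq, hnorm⟩, him, hre⟩ := hw
  set i0 : Fin (2*m+2) := ⟨0, by omega⟩ with hi0
  set i1 : Fin (2*m+2) := ⟨1, by omega⟩ with hi1
  -- all coordinates with index ≥ 2 vanish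
  have hzero : ∀ j : Fin (2*m+2), 2 ≤ j.val → w j = 0 := by
    intro j hj
    by_contra hne
    have h1 : (PhiMap m ε)^[k] w j = w j := by rw [hfix]
    rw [iter_formula] at h1
    have h3 : Complex.exp (2*(Real.pi:ℂ)*Complex.I*((wtPhi m ε j:ℝ):ℂ)) ^ k = 1 := by
      have := mul_right_cancel₀ hne (h1.trans (one_mul (w j)).symm)
      exact this
    rw [← Complex.exp_nat_mul, Complex.exp_eq_one_iff] at h3
    obtain ⟨n, hn⟩ := h3
    have hδ : (k:ℂ) * ((wtPhi m ε j:ℝ):ℂ) = (n:ℂ) := by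
      have h4 : (2*(Real.pi:ℂ)*Complex.I) * ((k:ℂ)*((wtPhi m ε j:ℝ):ℂ))
          = (2*(Real.pi:ℂ)*Complex.I) * (n:ℂ) := by linear_combination hn
      exact mul_left_cancel₀ twopiI_ne h4
    have hreal : (k:ℝ) * wtPhi m ε j = (n:ℝ) := by exact_mod_cast hδ
    have hirr : Irrational (wtPhi m ε j) := by
      unfold wtPhi
      rw [dif_neg (by omega)]
      split
      · exact hε _
      · exact (hε _).neg
    have hirr2 : Irrational ((k:ℝ) * wtPhi m ε j) := by
      exact hirr.natCast_mul (by omega : k ≠ 0)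
    exact hirr2.ne_int n hreal
  -- the cross-term sum vanishes
  have hsum0 : ∑ j : Fin m, w (idxA m j) * w (idxB m j) = 0 :=
    Finset.sum_eq_zero fun j _ => by
      rw [hzero (idxA m j) (by simp only [idxA]; omega)]; ring
  rw [hsum0] at heq
  have heq' : w i0 ^ 2 + w i1 ^ 2 = 0 := by
    have := heq
    simp only [hi0, hi1] at this ⊢
    linear_combination this
  have hfac : (w i1 - Complex.I * w i0) * (w i1 + Complex.I * w i0) = 0 := by
    linear_combination heq' + (- (w i0 ^ 2)) * Complex.I_sq
  -- norm condition reduces to first two coordinates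
  have hne01 : i0 ≠ i1 := by simp [hi0, hi1, Fin.ext_iff]
  have hnorm2 : ‖w i0‖^2 + ‖w i1‖^2 = 1 := by
    have hsub : ∑ x ∈ ({i0, i1} : Finset (Fin (2*m+2))), ‖w x‖^2
        = ∑ x, ‖w x‖^2 := by
      apply Finset.sum_subset (Finset.subset_univ _)
      intro x _ hx
      simp only [Finset.mem_insert, Finset.mem_singleton, not_or] at hx
      have hx2 : 2 ≤ x.val := by
        have h0 : x.val ≠ 0 := fun h => hx.1 (Fin.ext h)
        have h1 : x.val ≠ 1 := fun h => hx.2 (Fin.ext h)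
        omega
      simp [hzero x hx2]
    rw [← hsub, Finset.sum_pair hne01] at hnorm
    exact hnorm
  -- w i0 is a nonneg real r with r^2 = 1/2
  have hw0 : w i0 = ((w i0).re : ℂ) := Complex.ext rfl (by simp [him])
  set r : ℝ := (w i0).re with hrdef
  have hrnn : 0 ≤ r := hre
  have habs1 : ‖w i1‖ = ‖w i0‖ := by
    rcases mul_eq_zero.mp hfac with h | h
    · rw [sub_eq_zero.mp h]; simp
    · have : w i1 = -(Complex.I * w i0) := eq_neg_of_add_eq_zero_left h
      rw [this]; simp
  have habs0 : ‖w i0‖ = r := by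
    rw [hw0, Complex.norm_real, Real.norm_eq_abs]
    exact _root_.abs_of_nonneg hrnn
  have hr2 : r^2 = 1/2 := by
    rw [habs1, habs0] at hnorm2
    linarith
  have hrval : r = (Real.sqrt 2)⁻¹ := by
    have : r = Real.sqrt (r^2) := (Real.sqrt_sq hrnn).symm
    rw [this, hr2, one_div, Real.sqrt_inv]
  have hw0val : w i0 = 1 / (Real.sqrt 2 : ℂ) := by
    rw [hw0, hrval]
    push_cast
    rw [one_div]
  -- split on the two factors
  rcases mul_eq_zero.mp hfac with h | h
  · left
    have hw1 : w i1 = Complex.I * w i0 := sub_eq_zero.mp h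
    funext j
    rcases Nat.lt_or_ge j.val 2 with hj | hj
    · interval_cases hjv : j.val
      · have hj0 : j = i0 := Fin.ext hjv
        rw [hj0, hw0val]
        simp [pPt, pPt, hjv, hi0]
      · have hj1 : j = i1 := Fin.ext hjv
        rw [hj1, hw1, hw0val]
        simp only [pPt, hi1]
        norm_num
        rw [div_eq_mul_inv]
    · rw [hzero j hj]
      simp only [pPt]
      rw [if_neg (by omega), if_neg (by omega)]
  · right
    have hw1 : w i1 = -(Complex.I * w i0) := eq_neg_of_add_eq_zero_left h
    funext j
    rcases Nat.lt_or_ge j.val 2 with hj | hj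
    · interval_cases hjv : j.val
      · have hj0 : j = i0 := Fin.ext hjv
        rw [hj0, hw0val]
        simp [qPt, hjv, hi0]
      · have hj1 : j = i1 := Fin.ext hjv
        rw [hj1, hw1, hw0val]
        simp only [qPt, hi1]
        norm_num
        rw [div_eq_mul_inv]
        ring
    · rw [hzero j hj]
      simp only [qPt]
      rw [if_neg (by omega), if_neg (by omega)]
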